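/- Let ℓ ≥ 2 and τ_0 ≥ 2ℓ. Define a_0(s) = Π_{w=s+1}^{τ−1}(1 − ℓ/(2w)) and f_0(s) = (s/(τ−1))^{ℓ/2} for τ_0 ≤ s ≤ τ−1. Then f_0(s) ≥ a_0(s), and for s ≥ 2ℓ, f_0(s)/a_0(s) ≤ exp(ℓ²(τ−1−s)/(4s(τ−1))). Consequently 0 ≤ f_0(s) − a_0(s) ≤ ℓ/(2(τ−1)) for all τ_0 ≤ s ≤ τ−1 (assuming s ≥ ℓ; for s ≤ ℓ one has f_0(s) − a_0(s) ≤ f_0(s) ≤ s/(τ−1) ≤ ℓ/(τ−1)). -/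

import Mathlib

open Finset Real

private lemma tel_prod (s : ℕ) (hs : 1 ≤ s) : ∀ n, s ≤ n →
    ∏ w ∈ Finset.Icc (s+1) n, (1 - 1/(w:ℝ)) = (s:ℝ) / n := by
  intro n hn
  induction n, hn using Nat.le_induction with
  | base =>
    rw [Finset.Icc_eq_empty (by omega), Finset.prod_empty]
    have : (s:ℝ) ≠ 0 := by positivity
    field_simp
  | succ n hn ih =>
    rw [Finset.prod_Icc_succ_top (by omega), ih]
    have hn0 : (1:ℝ) ≤ (n:ℝ) := by exact_mod_cast hs.trans hn
    have h1 : (n:ℝ) ≠ 0 := by linarith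
    have h2 : (n:ℝ) + 1 ≠ 0 := by linarith
    push_cast
    field_simp
    ring

private lemma tel_sum (s : ℕ) (hs : 1 ≤ s) : ∀ n, s ≤ n →
    ∑ w ∈ Finset.Icc (s+1) n, 1/((w:ℝ))^2 ≤ 1/(s:ℝ) - 1/(n:ℝ) := by
  intro n hn
  induction n, hn using Nat.le_induction with
  | base => rw [Finset.Icc_eq_empty (by omega)]; simp
  | succ n hn ih =>
    rw [Finset.sum_Icc_succ_top (by omega)]
    have hn0 : (1:ℝ) ≤ (n:ℝ) := by exact_mod_cast hs.trans hn
    have : 1/((n:ℝ)+1)^2 ≤ 1/(n:ℝ) - 1/((n:ℝ)+1) := by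
      rw [div_sub_div _ _ (by linarith) (by linarith)]
      rw [div_le_div_iff₀ (by positivity) (by positivity)]
      nlinarith
    push_cast
    linarith

private lemma exp_quad (t : ℝ) (ht : 0 ≤ t) : (1 + t/2)^2 ≤ Real.exp t := by
  have h := Real.add_one_le_exp (t/2)
  have h0 : (0:ℝ) ≤ 1 + t/2 := by linarith
  calc (1 + t/2)^2 ≤ (Real.exp (t/2))^2 := by nlinarith [Real.exp_pos (t/2)]
    _ = Real.exp t := by rw [sq, ← Real.exp_add]; ring_nf

private lemma exp_lb (x : ℝ) (h0 : 0 ≤ x) (h4 : x ≤ 1/4) :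
    Real.exp (-(x + x^2)) ≤ 1 - x := by
  set t := x + x^2 with ht
  have hq := exp_quad t (by positivity)
  have a1 : x^2 ≤ x/4 := by nlinarith
  have a2 : x^3 ≤ x^2/4 := by nlinarith [sq_nonneg x]
  have a3 : x^4 ≤ x^3/4 := by nlinarith [pow_nonneg h0 3]
  have a4 : x^5 ≤ x^4/4 := by nlinarith [pow_nonneg h0 4]
  have key : 1 ≤ (1 - x) * (1 + t/2)^2 := by rw [ht]; nlinarith [sq_nonneg x]
  have hpos : (0:ℝ) < (1 + t/2)^2 := by nlinarith
  have h2 : Real.exp (-t) * (1 + t/2)^2 ≤ 1 := by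
    calc Real.exp (-t) * (1 + t/2)^2 ≤ Real.exp (-t) * Real.exp t :=
          mul_le_mul_of_nonneg_left hq (Real.exp_pos _).le
      _ = 1 := by rw [← Real.exp_add]; simp
  exact le_of_mul_le_mul_right (h2.trans key) hpos

private lemma fac_lb (l w : ℝ) (hl : 2 ≤ l) (hw : 2*l ≤ w) :
    Real.exp (-(l/(2*w)) - l^2/(4*w^2)) ≤ 1 - l/(2*w) := by
  have hw0 : (0:ℝ) < w := by linarith
  have hx0 : 0 ≤ l/(2*w) := by positivity
  have hx4 : l/(2*w) ≤ 1/4 := by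
    rw [div_le_div_iff₀ (by linarith) (by norm_num)]; linarith
  have h := exp_lb (l/(2*w)) hx0 hx4
  have heq : (-(l/(2*w)) - l^2/(4*w^2)) = -((l/(2*w)) + (l/(2*w))^2) := by
    field_simp; ring
  rw [heq]; exact h

private lemma fac_ub (l w : ℝ) (hl : 0 ≤ l) (hw : 1 < w) :
    (1 - 1/w) ^ (l/2) ≤ Real.exp (-(l/(2*w))) := by
  have h0 : (0:ℝ) < 1 - 1/w := by
    rw [sub_pos, div_lt_one (by linarith)]; linarith
  rw [Real.rpow_def_of_pos h0]
  apply Real.exp_le_exp.mpr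
  have hlog : Real.log (1 - 1/w) ≤ -(1/w) := by
    have := Real.log_le_sub_one_of_pos h0; linarith
  rw [mul_comm]
  calc l/2 * Real.log (1-1/w) ≤ l/2 * (-(1/w)) :=
        mul_le_mul_of_nonneg_left hlog (by linarith)
    _ = -(l/(2*w)) := by ring

private lemma fac_bern (l w : ℝ) (hl : 2 ≤ l) (hw : 1 ≤ w) :
    1 - l/(2*w) ≤ (1 - 1/w) ^ (l/2) := by
  have hw0 : (0:ℝ) < w := by linarith
  have hs : (-1:ℝ) ≤ -(1/w) := by
    have : 1/w ≤ 1 := by rw [div_le_one hw0]; linarith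
    linarith
  have h := one_add_mul_self_le_rpow_one_add hs (p := l/2) (by linarith)
  have h1 : 1 + l/2 * (-(1/w)) = 1 - l/(2*w) := by ring
  have h2 : 1 + -(1/w) = 1 - 1/w := by ring
  rw [h1, h2] at h
  exact h

set_option maxHeartbeats 1000000 in
theorem stmt16 (ℓ τ₀ τ s : ℕ) (hℓ : 2 ≤ ℓ) (hτ₀ : 2 * ℓ ≤ τ₀) (hτ : 2 ≤ τ)
    (hs1 : τ₀ ≤ s) (hs2 : s ≤ τ - 1) :
    (∏ w ∈ Finset.Icc (s + 1) (τ - 1), (1 - (ℓ : ℝ) / (2 * (w : ℝ))))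
        ≤ ((s : ℝ) / ((τ : ℝ) - 1)) ^ ((ℓ : ℝ) / 2) ∧
    ((s : ℝ) / ((τ : ℝ) - 1)) ^ ((ℓ : ℝ) / 2)
        / (∏ w ∈ Finset.Icc (s + 1) (τ - 1), (1 - (ℓ : ℝ) / (2 * (w : ℝ))))
      ≤ Real.exp ((ℓ : ℝ) ^ 2 * ((τ : ℝ) - 1 - (s : ℝ)) / (4 * (s : ℝ) * ((τ : ℝ) - 1))) ∧
    0 ≤ ((s : ℝ) / ((τ : ℝ) - 1)) ^ ((ℓ : ℝ) / 2)
        - ∏ w ∈ Finset.Icc (s + 1) (τ - 1), (1 - (ℓ : ℝ) / (2 * (w : ℝ))) ∧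
    ((s : ℝ) / ((τ : ℝ) - 1)) ^ ((ℓ : ℝ) / 2)
        - (∏ w ∈ Finset.Icc (s + 1) (τ - 1), (1 - (ℓ : ℝ) / (2 * (w : ℝ))))
      ≤ (ℓ : ℝ) / (2 * ((τ : ℝ) - 1)) := by
  have hTc : (((τ - 1 : ℕ)) : ℝ) = (τ : ℝ) - 1 := by
    rw [Nat.cast_sub (by omega)]; norm_num
  rw [← hTc]
  set T : ℕ := τ - 1 with hT
  clear_value T
  set l : ℝ := (ℓ : ℝ) with hldef
  clear_value l
  have hl2 : (2:ℝ) ≤ l := by rw [hldef]; exact_mod_cast hℓ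
  have hsl : 2*l ≤ (s:ℝ) := by
    have h : 2*ℓ ≤ s := le_trans hτ₀ hs1
    rw [hldef]
    exact_mod_cast h
  have hs0 : (0:ℝ) < (s:ℝ) := by linarith
  have hs1' : (1:ℕ) ≤ s := by omega
  have hsT : (s:ℝ) ≤ (T:ℝ) := by exact_mod_cast hs2
  have hT0 : (0:ℝ) < (T:ℝ) := lt_of_lt_of_le hs0 hsT
  -- facts about members of the index set
  have hmem : ∀ w ∈ Finset.Icc (s+1) T, 2*l ≤ (w:ℝ) ∧ 1 < (w:ℝ) := by
    intro w hw
    rw [Finset.mem_Icc] at hw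
    have h1 : (s:ℝ) + 1 ≤ (w:ℝ) := by exact_mod_cast hw.1
    constructor <;> linarith
  have hfac0 : ∀ w ∈ Finset.Icc (s+1) T, (0:ℝ) ≤ 1 - l/(2*(w:ℝ)) := by
    intro w hw
    obtain ⟨h1, h2⟩ := hmem w hw
    rw [sub_nonneg, div_le_one (by linarith)]
    linarith
  have hfac0' : ∀ w ∈ Finset.Icc (s+1) T, (0:ℝ) ≤ 1 - 1/(w:ℝ) := by
    intro w hw
    obtain ⟨h1, h2⟩ := hmem w hw
    rw [sub_nonneg, div_le_one (by linarith)]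
    linarith
  -- express F as a product
  have hFprod : ((s:ℝ)/(T:ℝ)) ^ (l/2)
      = ∏ w ∈ Finset.Icc (s+1) T, (1 - 1/(w:ℝ)) ^ (l/2) := by
    rw [Real.finset_prod_rpow _ _ hfac0' (l/2), tel_prod s hs1' T hs2]
  set F := ((s:ℝ)/(T:ℝ)) ^ (l/2) with hF
  set P := ∏ w ∈ Finset.Icc (s+1) T, (1 - l/(2*(w:ℝ))) with hP
  clear_value F P
  rw [hF] at hFprod
  -- Part 1 : P ≤ F
  have part1 : P ≤ F := by
    rw [hF, hFprod, hP]
    apply Finset.prod_le_prod hfac0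
    intro w hw
    exact fac_bern l w hl2 (by linarith [(hmem w hw).2])
  -- upper bound on F
  have hFe : F ≤ Real.exp (∑ w ∈ Finset.Icc (s+1) T, -(l/(2*(w:ℝ)))) := by
    rw [hF, hFprod, Real.exp_sum]
    apply Finset.prod_le_prod
    · intro w hw; exact Real.rpow_nonneg (hfac0' w hw) _
    · intro w hw; exact fac_ub l w (by linarith) (hmem w hw).2
  -- lower bound on P
  have hPe : Real.exp (∑ w ∈ Finset.Icc (s+1) T, (-(l/(2*(w:ℝ))) - l^2/(4*(w:ℝ)^2))) ≤ P := by
    rw [Real.exp_sum, hP]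
    apply Finset.prod_le_prod
    · intro w hw; exact (Real.exp_pos _).le
    · intro w hw; exact fac_lb l w hl2 (hmem w hw).1
  have hP0 : (0:ℝ) < P := lt_of_lt_of_le (Real.exp_pos _) hPe
  -- sum bound
  have hsum : ∑ w ∈ Finset.Icc (s+1) T, l^2/(4*(w:ℝ)^2)
      ≤ l^2 * ((T:ℝ) - (s:ℝ)) / (4 * (s:ℝ) * (T:ℝ)) := by
    have h1 : ∑ w ∈ Finset.Icc (s+1) T, l^2/(4*(w:ℝ)^2)
        = l^2/4 * ∑ w ∈ Finset.Icc (s+1) T, 1/((w:ℝ))^2 := by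
      rw [Finset.mul_sum]
      exact Finset.sum_congr rfl fun w _ => by ring
    rw [h1]
    have h2 := tel_sum s hs1' T hs2
    have h3 : l^2/4 * (∑ w ∈ Finset.Icc (s+1) T, 1/((w:ℝ))^2)
        ≤ l^2/4 * (1/(s:ℝ) - 1/(T:ℝ)) :=
      mul_le_mul_of_nonneg_left h2 (by positivity)
    have h4 : l^2/4 * (1/(s:ℝ) - 1/(T:ℝ)) = l^2 * ((T:ℝ) - (s:ℝ)) / (4 * (s:ℝ) * (T:ℝ)) := by
      field_simp
    linarith
  -- Part 2
  set X := l^2 * ((T:ℝ) - (s:ℝ)) / (4 * (s:ℝ) * (T:ℝ)) with hX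
  clear_value X
  have part2 : F / P ≤ Real.exp X := by
    have h1 : F / P ≤ Real.exp (∑ w ∈ Finset.Icc (s+1) T, -(l/(2*(w:ℝ))))
        / Real.exp (∑ w ∈ Finset.Icc (s+1) T, (-(l/(2*(w:ℝ))) - l^2/(4*(w:ℝ)^2))) :=
      div_le_div₀ (Real.exp_pos _).le hFe (Real.exp_pos _) hPe
    rw [← Real.exp_sub] at h1
    have h2 : (∑ w ∈ Finset.Icc (s+1) T, -(l/(2*(w:ℝ))))
        - (∑ w ∈ Finset.Icc (s+1) T, (-(l/(2*(w:ℝ))) - l^2/(4*(w:ℝ)^2)))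
        = ∑ w ∈ Finset.Icc (s+1) T, l^2/(4*(w:ℝ)^2) := by
      rw [← Finset.sum_sub_distrib]
      exact Finset.sum_congr rfl fun w _ => by ring
    rw [h2] at h1
    exact h1.trans (Real.exp_le_exp.mpr hsum)
  -- Part 4
  have hX0 : 0 ≤ X := by
    rw [hX]
    have : (0:ℝ) ≤ (T:ℝ) - (s:ℝ) := by linarith
    positivity
  have hPF : F * Real.exp (-X) ≤ P := by
    rw [div_le_iff₀ hP0] at part2
    calc F * Real.exp (-X) ≤ (Real.exp X * P) * Real.exp (-X) :=
          mul_le_mul_of_nonneg_right part2 (Real.exp_pos _).le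
      _ = P * (Real.exp X * Real.exp (-X)) := by ring
      _ = P := by rw [← Real.exp_add]; simp
  have hF0 : 0 ≤ F := by
    rw [hF]; exact Real.rpow_nonneg (by positivity) _
  have h1exp : 1 - Real.exp (-X) ≤ X := by
    have := Real.add_one_le_exp (-X); linarith
  -- the key maximization:  F * X ≤ l / (2 T)
  have hFX : F * X ≤ l / (2 * (T:ℝ)) := by
    obtain ⟨u, hu⟩ : ∃ u : ℝ, u = (s:ℝ)/(T:ℝ) := ⟨_, rfl⟩
    rw [← hu] at hF
    have hu0 : 0 < u := by rw [hu]; positivity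
    have hu1 : u ≤ 1 := by rw [hu, div_le_one hT0]; exact hsT
    have hl0 : (0:ℝ) < l := by linarith
    -- key : u^(l/2-1) * (1-u) ≤ 2/l
    have key : u ^ (l/2 - 1) * (1 - u) ≤ 2/l := by
      have hp : (0:ℝ) ≤ l/2 - 1 := by linarith
      have hlog : Real.log u ≤ u - 1 := Real.log_le_sub_one_of_pos hu0
      have h1 : u ^ (l/2 - 1) ≤ Real.exp ((l/2-1)*(u-1)) := by
        rw [Real.rpow_def_of_pos hu0]
        apply Real.exp_le_exp.mpr
        rw [mul_comm]
        exact mul_le_mul_of_nonneg_left hlog hp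
      obtain ⟨D, hD⟩ : ∃ D : ℝ, D = 1 + (l/2-1)*(1-u) := ⟨_, rfl⟩
      have hD0 : 0 < D := by
        rw [hD]; nlinarith [mul_nonneg hp (by linarith : (0:ℝ) ≤ 1 - u)]
      have hb : D ≤ Real.exp ((l/2-1)*(1-u)) := by
        have := Real.add_one_le_exp ((l/2-1)*(1-u)); rw [hD]; linarith
      have h2 : Real.exp ((l/2-1)*(u-1)) ≤ D⁻¹ := by
        rw [show (l/2-1)*(u-1) = -((l/2-1)*(1-u)) by ring, Real.exp_neg]
        exact inv_anti₀ hD0 hb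
      have h3 : u ^ (l/2 - 1) * (1 - u) ≤ D⁻¹ * (1 - u) :=
        mul_le_mul_of_nonneg_right (h1.trans h2) (by linarith)
      have h4 : D⁻¹ * (1 - u) ≤ 2/l := by
        rw [inv_mul_eq_div, div_le_div_iff₀ hD0 hl0, hD]
        nlinarith
      linarith
    have hsplit : u ^ (l/2) = u ^ (l/2 - 1) * u := by
      have h := Real.rpow_add hu0 (l/2 - 1) 1
      rw [Real.rpow_one] at h
      rw [← h]
      congr 1
      ring
    have hrw : u * X = (1 - u) * (l^2/(4*(T:ℝ))) := by
      rw [hX, hu]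
      field_simp
    calc F * X = u ^ (l/2-1) * (u * X) := by rw [hF, hsplit]; ring
      _ = (u ^ (l/2-1) * (1-u)) * (l^2/(4*(T:ℝ))) := by rw [hrw]; ring
      _ ≤ (2/l) * (l^2/(4*(T:ℝ))) := mul_le_mul_of_nonneg_right key (by positivity)
      _ = l / (2*(T:ℝ)) := by field_simp; ring
  have part4 : F - P ≤ l / (2 * (T:ℝ)) := by
    have h1 : F - P ≤ F * (1 - Real.exp (-X)) := by nlinarith
    have h2 : F * (1 - Real.exp (-X)) ≤ F * X :=
      mul_le_mul_of_nonneg_left h1exp hF0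
    linarith
  exact ⟨part1, part2, sub_nonneg.mpr part1, part4⟩
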